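/- Let ℓ be a squarefree positive integer (or any positive integer). Then ∑_{u ≥ 1, all prime factors of u divide ℓ} (log u)/u ≪ (log log(ℓ+2))², with an absolute implied constant. -/

import Mathlib

open Real Classical

open Finset


lemma theta_bound (N : ℕ) : ∑ p ∈ (range (N+1)).filter Nat.Prime, Real.log p ≤ N * Real.log 4 := by
  have h1 : ((primorial N : ℕ) : ℝ) ≤ ((4 ^ N : ℕ) : ℝ) := by
    exact_mod_cast primorial_le_4_pow N
  have h2 : Real.log (primorial N) ≤ Real.log ((4:ℝ) ^ N) := by
    apply Real.log_le_log (by exact_mod_cast Nat.pos_of_ne_zero (primorial_pos N).ne')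
    push_cast at h1 ⊢; exact h1
  rw [Real.log_pow] at h2
  calc ∑ p ∈ (range (N+1)).filter Nat.Prime, Real.log p
      = Real.log ((primorial N : ℕ) : ℝ) := by
        rw [primorial]
        push_cast
        rw [Real.log_prod]
        intro p hp
        have := (Finset.mem_filter.mp hp).2.pos
        positivity
    _ ≤ N * Real.log 4 := h2


lemma swap_lemma (N : ℕ) :
    ∑ p ∈ (range (N+1)).filter Nat.Prime, ((N / p : ℕ) : ℝ) * Real.log p
      = ∑ n ∈ Icc 1 N, ∑ p ∈ n.primeFactors, Real.log p := by
  have hpf : ∀ n ∈ Icc 1 N, n.primeFactors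
      = ((range (N+1)).filter Nat.Prime).filter (· ∣ n) := by
    intro n hn
    obtain ⟨hn1, hn2⟩ := Finset.mem_Icc.mp hn
    ext p
    simp only [Nat.mem_primeFactors, Finset.mem_filter, Finset.mem_range]
    constructor
    · rintro ⟨hp, hpd, -⟩
      exact ⟨⟨Nat.lt_succ_of_le ((Nat.le_of_dvd (by omega) hpd).trans hn2), hp⟩, hpd⟩
    · rintro ⟨⟨-, hp⟩, hpd⟩
      exact ⟨hp, hpd, by omega⟩
  symm
  calc ∑ n ∈ Icc 1 N, ∑ p ∈ n.primeFactors, Real.log p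
      = ∑ n ∈ Icc 1 N, ∑ p ∈ (range (N+1)).filter Nat.Prime,
          if p ∣ n then Real.log p else 0 := by
        refine Finset.sum_congr rfl fun n hn => ?_
        rw [hpf n hn, Finset.sum_filter]
    _ = ∑ p ∈ (range (N+1)).filter Nat.Prime, ∑ n ∈ Icc 1 N,
          if p ∣ n then Real.log p else 0 := Finset.sum_comm
    _ = ∑ p ∈ (range (N+1)).filter Nat.Prime, ((N / p : ℕ) : ℝ) * Real.log p := by
        refine Finset.sum_congr rfl fun p hp => ?_
        rw [← Finset.sum_filter, Finset.sum_const,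
          show Icc 1 N = Ioc 0 N from rfl, Nat.Ioc_filter_dvd_card_eq_div,
          nsmul_eq_mul]

lemma mertens1 (N : ℕ) (hN : 1 ≤ N) :
    ∑ p ∈ (range (N+1)).filter Nat.Prime, Real.log p / p
      ≤ Real.log N + Real.log 4 := by
  have hNpos : (0:ℝ) < N := by exact_mod_cast hN
  -- inner bound
  have hinner : ∀ n ∈ Icc 1 N, ∑ p ∈ n.primeFactors, Real.log p ≤ Real.log N := by
    intro n hn
    obtain ⟨hn1, hn2⟩ := Finset.mem_Icc.mp hn
    have h1 : ∑ p ∈ n.primeFactors, Real.log p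
        = Real.log (((∏ p ∈ n.primeFactors, p : ℕ) : ℝ)) := by
      push_cast
      rw [Real.log_prod]
      intro p hp
      have := (Nat.prime_of_mem_primeFactors hp).pos
      positivity
    rw [h1]
    apply Real.log_le_log (by exact_mod_cast Nat.pos_of_ne_zero (by
      intro h
      have := Nat.prod_primeFactors_dvd n
      rw [h] at this
      have := Nat.eq_zero_of_zero_dvd this
      omega))
    have h2 : (∏ p ∈ n.primeFactors, p) ≤ n :=
      Nat.le_of_dvd (by omega) (Nat.prod_primeFactors_dvd n)
    exact_mod_cast h2.trans hn2
  have hsum : ∑ p ∈ (range (N+1)).filter Nat.Prime, ((N / p : ℕ) : ℝ) * Real.log p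
      ≤ N * Real.log N := by
    rw [swap_lemma]
    calc ∑ n ∈ Icc 1 N, ∑ p ∈ n.primeFactors, Real.log p
        ≤ ∑ n ∈ Icc 1 N, Real.log N := Finset.sum_le_sum hinner
      _ = N * Real.log N := by
          rw [Finset.sum_const, Nat.card_Icc, nsmul_eq_mul]
          norm_num
  -- pointwise : N/p ≤ (N/p : ℕ) + 1
  have hpt : ∀ p ∈ (range (N+1)).filter Nat.Prime,
      (N : ℝ) / p * Real.log p ≤ ((N / p : ℕ) : ℝ) * Real.log p + Real.log p := by
    intro p hp
    have hp2 := (Finset.mem_filter.mp hp).2.two_le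
    have hppos : (0:ℝ) < p := by exact_mod_cast (by omega : 0 < p)
    have hlogp : 0 ≤ Real.log p := Real.log_nonneg (by exact_mod_cast (by omega : 1 ≤ p))
    have hdiv : (N:ℝ)/p ≤ ((N / p : ℕ) : ℝ) + 1 := by
      rw [div_le_iff₀ hppos]
      have h : N < (N/p + 1) * p := by
        have h0 := Nat.div_add_mod N p
        have h1 := Nat.mod_lt N (show 0 < p by omega)
        have : (N/p+1)*p = p*(N/p) + p := by ring
        omega
      calc (N:ℝ) ≤ ((N/p + 1) * p : ℕ) := by exact_mod_cast h.le
        _ = (((N/p:ℕ):ℝ) + 1) * p := by push_cast; ring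
    nlinarith
  have main : (N:ℝ) * ∑ p ∈ (range (N+1)).filter Nat.Prime, Real.log p / p
      ≤ N * Real.log N + N * Real.log 4 := by
    rw [Finset.mul_sum]
    calc ∑ p ∈ (range (N+1)).filter Nat.Prime, (N:ℝ) * (Real.log p / p)
        = ∑ p ∈ (range (N+1)).filter Nat.Prime, (N:ℝ) / p * Real.log p := by
          refine Finset.sum_congr rfl fun p hp => ?_; ring
      _ ≤ ∑ p ∈ (range (N+1)).filter Nat.Prime,
            (((N / p : ℕ) : ℝ) * Real.log p + Real.log p) := Finset.sum_le_sum hpt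
      _ = (∑ p ∈ (range (N+1)).filter Nat.Prime, ((N / p : ℕ) : ℝ) * Real.log p)
          + ∑ p ∈ (range (N+1)).filter Nat.Prime, Real.log p := Finset.sum_add_distrib
      _ ≤ N * Real.log N + N * Real.log 4 := add_le_add hsum (theta_bound N)
  have main2 : (N:ℝ) * ∑ p ∈ (range (N+1)).filter Nat.Prime, Real.log p / p
      ≤ N * (Real.log N + Real.log 4) := by linarith
  exact le_of_mul_le_mul_left main2 hNpos

-- D bound
lemma Dbound (J : ℕ) : ∑ p ∈ (range (2^(J+1))).filter Nat.Prime, Real.log p / p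
    ≤ ((J:ℝ) + 3) * Real.log 2 := by
  have h2 : (2:ℕ)^(J+1) - 1 + 1 = 2^(J+1) := by
    have : 0 < (2:ℕ)^(J+1) := Nat.pow_pos (by norm_num)
    omega
  have h1 : 1 ≤ (2:ℕ)^(J+1) - 1 := by
    have : (2:ℕ) ≤ 2^(J+1) := Nat.le_self_pow (by omega) 2
    omega
  have := mertens1 ((2:ℕ)^(J+1) - 1) h1
  rw [h2] at this
  refine this.trans ?_
  have hlog4 : Real.log 4 = 2 * Real.log 2 := by
    rw [show (4:ℝ) = 2^2 by norm_num, Real.log_pow]; push_cast; ring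
  have hlogN : Real.log ((2:ℕ)^(J+1) - 1 : ℕ) ≤ ((J:ℝ)+1) * Real.log 2 := by
    have hle : (((2:ℕ)^(J+1) - 1 : ℕ) : ℝ) ≤ (2:ℝ)^(J+1) := by
      have : ((2:ℕ)^(J+1) - 1 : ℕ) ≤ 2^(J+1) := by omega
      exact_mod_cast this
    calc Real.log ((2:ℕ)^(J+1) - 1 : ℕ) ≤ Real.log ((2:ℝ)^(J+1)) := by
          apply Real.log_le_log (by exact_mod_cast h1.trans_eq (by omega)) hle
      _ = ((J:ℝ)+1) * Real.log 2 := by rw [Real.log_pow]; push_cast; ring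
  linarith

lemma mertens2aux : ∀ J : ℕ, 1 ≤ J →
    ∑ p ∈ (range (2^(J+1))).filter Nat.Prime, (1:ℝ)/p
      ≤ Real.log J + (∑ p ∈ (range (2^(J+1))).filter Nat.Prime, Real.log p / p) / (J * Real.log 2)
        + 8 * (1 - 1/J) := by
  have hl2 : (0:ℝ) < Real.log 2 := Real.log_pos (by norm_num)
  intro J hJ
  induction J, hJ using Nat.le_induction with
  | base =>
    have hQ : (range (2^2)).filter Nat.Prime = {2, 3} := by decide
    rw [hQ]
    rw [Finset.sum_insert (by decide), Finset.sum_singleton,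
        Finset.sum_insert (by decide), Finset.sum_singleton]
    push_cast
    have hl3 : Real.log 2 ≤ Real.log 3 := Real.log_le_log (by norm_num) (by norm_num)
    have key : (1:ℝ)/3 ≤ Real.log 3 / 3 / Real.log 2 := by
      rw [le_div_iff₀ hl2]
      linarith
    have e1 : (Real.log 2 / 2 + Real.log 3 / 3) / (1 * Real.log 2)
        = 1/2 + Real.log 3 / 3 / Real.log 2 := by
      field_simp
    rw [e1]
    simp only [Real.log_one]
    norm_num
    linarith
  | succ J hJ ih =>
    set Q := fun (j:ℕ) => (range (2^(j+1))).filter Nat.Prime with hQdef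
    have hsub : Q J ⊆ Q (J+1) := by
      apply Finset.filter_subset_filter
      apply Finset.range_subset_range.mpr
      exact Nat.pow_le_pow_right (by norm_num : 2 > 0) (by omega)
    have hJpos : (0:ℝ) < J := by exact_mod_cast hJ
    have hJ1pos : (0:ℝ) < (J:ℝ)+1 := by linarith
    -- new primes bound
    have hnew : ∑ p ∈ Q (J+1) \ Q J, (1:ℝ)/p
        ≤ (∑ p ∈ Q (J+1) \ Q J, Real.log p / p) / (((J:ℝ)+1) * Real.log 2) := by
      rw [Finset.sum_div]
      apply Finset.sum_le_sum
      intro p hp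
      obtain ⟨hp1, hp2⟩ := Finset.mem_sdiff.mp hp
      have hprime := (Finset.mem_filter.mp hp1).2
      have hpge : (2:ℕ)^(J+1) ≤ p := by
        by_contra hcon
        exact hp2 (Finset.mem_filter.mpr ⟨Finset.mem_range.mpr (by omega), hprime⟩)
      have hppos : (0:ℝ) < p := by exact_mod_cast hprime.pos
      have hlogp : ((J:ℝ)+1) * Real.log 2 ≤ Real.log p := by
        calc ((J:ℝ)+1) * Real.log 2 = Real.log ((2:ℝ)^(J+1)) := by
              rw [Real.log_pow]; push_cast; ring
          _ ≤ Real.log p := Real.log_le_log (by positivity) (by exact_mod_cast hpge)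
      rw [div_div]
      rw [div_le_div_iff₀ hppos (by positivity)]
      calc 1 * (p * (((J:ℝ)+1) * Real.log 2)) = p * (((J:ℝ)+1) * Real.log 2) := by ring
        _ ≤ p * Real.log p := by
            apply mul_le_mul_of_nonneg_left hlogp hppos.le
        _ = Real.log p * p := by ring
    have hsplit : ∑ p ∈ Q (J+1), (1:ℝ)/p
        = ∑ p ∈ Q (J+1) \ Q J, (1:ℝ)/p + ∑ p ∈ Q J, (1:ℝ)/p :=
      (Finset.sum_sdiff hsub).symm
    have hsplitD : ∑ p ∈ Q (J+1) \ Q J, Real.log p / p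
        = (∑ p ∈ Q (J+1), Real.log p / p) - ∑ p ∈ Q J, Real.log p / p := by
      rw [eq_sub_iff_add_eq, Finset.sum_sdiff hsub]
    set d := ∑ p ∈ Q J, Real.log p / p with hd_def
    set d' := ∑ p ∈ Q (J+1), Real.log p / p with hd'_def
    have hd0 : 0 ≤ d := Finset.sum_nonneg fun p hp => by
      have h2 := (Finset.mem_filter.mp hp).2.two_le
      have : (1:ℝ) ≤ p := by exact_mod_cast Nat.one_le_iff_ne_zero.mpr (by omega)
      positivity
    have hdd' : d ≤ d' := Finset.sum_le_sum_of_subset_of_nonneg hsub (fun p hp _ => by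
      have h2 := (Finset.mem_filter.mp hp).2.two_le
      have : (1:ℝ) ≤ p := by exact_mod_cast Nat.one_le_iff_ne_zero.mpr (by omega)
      positivity)
    have hD : d ≤ ((J:ℝ)+3)*Real.log 2 := Dbound J
    -- key arithmetic inequality
    have hlog : 1/((J:ℝ)+1) ≤ Real.log ((J:ℝ)+1) - Real.log J := by
      have h1 : Real.log ((J:ℝ)/(J+1)) ≤ (J:ℝ)/(J+1) - 1 :=
        Real.log_le_sub_one_of_pos (by positivity)
      rw [Real.log_div (by positivity) (by positivity)] at h1
      have : (J:ℝ)/(J+1) - 1 = -(1/(J+1)) := by field_simp; ring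
      linarith [this ▸ h1]
    have e1 : d/((J:ℝ)*Real.log 2) - d/(((J:ℝ)+1)*Real.log 2) = d/((J:ℝ)*((J:ℝ)+1)*Real.log 2) := by
      field_simp
      ring
    have e2 : d/((J:ℝ)*((J:ℝ)+1)*Real.log 2) ≤ ((J:ℝ)+3)/((J:ℝ)*((J:ℝ)+1)) := by
      rw [div_le_div_iff₀ (by positivity) (by positivity)]
      calc d * ((J:ℝ)*((J:ℝ)+1)) ≤ ((J:ℝ)+3)*Real.log 2 * ((J:ℝ)*((J:ℝ)+1)) := by
            apply mul_le_mul_of_nonneg_right hD (by positivity)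
        _ = ((J:ℝ)+3) * ((J:ℝ)*((J:ℝ)+1)*Real.log 2) := by ring
    have e3 : ((J:ℝ)+3)/((J:ℝ)*((J:ℝ)+1)) ≤ 1/((J:ℝ)+1) + 8*(1/(J:ℝ) - 1/((J:ℝ)+1)) := by
      have : (1:ℝ)/((J:ℝ)+1) + 8*(1/(J:ℝ) - 1/((J:ℝ)+1)) = ((J:ℝ)+8)/((J:ℝ)*((J:ℝ)+1)) := by
        field_simp
        ring
      rw [this]
      gcongr
      norm_num
      
    have hsub_div : (d' - d)/(((J:ℝ)+1)*Real.log 2)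
        = d'/(((J:ℝ)+1)*Real.log 2) - d/(((J:ℝ)+1)*Real.log 2) := sub_div _ _ _
    rw [hsplitD] at hnew
    push_cast
    have hgoal : ∑ p ∈ Q (J+1), (1:ℝ)/p
        ≤ Real.log ((J:ℝ)+1) + d'/(((J:ℝ)+1) * Real.log 2) + 8*(1 - 1/((J:ℝ)+1)) := by
      rw [hsplit]
      have hih := ih
      linarith
    exact hgoal

lemma mertens2 (N : ℕ) (hN : 2 ≤ N) :
    ∑ p ∈ (range (N+1)).filter Nat.Prime, (1:ℝ)/p ≤ Real.log (Real.log N) + 13 := by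
  have hl2 : (0:ℝ) < Real.log 2 := Real.log_pos (by norm_num)
  set J := Nat.log 2 N with hJdef
  have hJ1 : 1 ≤ J := by
    rw [hJdef]
    exact Nat.log_pos (by norm_num) hN
  have hJpos : (0:ℝ) < J := by exact_mod_cast hJ1
  have hNlt : N < 2^(J+1) := Nat.lt_pow_succ_log_self (by norm_num) N
  have hsub : (range (N+1)).filter Nat.Prime ⊆ (range (2^(J+1))).filter Nat.Prime :=
    Finset.filter_subset_filter _ (Finset.range_subset_range.mpr (by omega))
  have h1 : ∑ p ∈ (range (N+1)).filter Nat.Prime, (1:ℝ)/p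
      ≤ ∑ p ∈ (range (2^(J+1))).filter Nat.Prime, (1:ℝ)/p := by
    apply Finset.sum_le_sum_of_subset_of_nonneg hsub
    intro p hp _
    have h2 := (Finset.mem_filter.mp hp).2.two_le
    have : (1:ℝ) ≤ p := by exact_mod_cast Nat.one_le_iff_ne_zero.mpr (by omega)
    positivity
  have h2 := mertens2aux J hJ1
  have hDb := Dbound J
  have hd0 : (0:ℝ) ≤ ∑ p ∈ (range (2^(J+1))).filter Nat.Prime, Real.log p / p := by
    apply Finset.sum_nonneg
    intro p hp
    have h2 := (Finset.mem_filter.mp hp).2.two_le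
    have : (1:ℝ) ≤ p := by exact_mod_cast Nat.one_le_iff_ne_zero.mpr (by omega)
    positivity
  have h3 : (∑ p ∈ (range (2^(J+1))).filter Nat.Prime, Real.log p / p) / ((J:ℝ) * Real.log 2)
      ≤ ((J:ℝ)+3)/(J:ℝ) := by
    rw [div_le_div_iff₀ (by positivity) hJpos]
    calc (∑ p ∈ (range (2^(J+1))).filter Nat.Prime, Real.log p / p) * (J:ℝ)
        ≤ ((J:ℝ)+3) * Real.log 2 * J := by
          apply mul_le_mul_of_nonneg_right hDb hJpos.le
      _ = ((J:ℝ)+3) * ((J:ℝ) * Real.log 2) := by ring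
  have h4 : ((J:ℝ)+3)/(J:ℝ) ≤ 4 := by
    rw [div_le_iff₀ hJpos]
    nlinarith [(by exact_mod_cast hJ1 : (1:ℝ) ≤ (J:ℝ))]
  -- log J ≤ log log N + 1
  have hJleN : (J:ℝ) ≤ Real.log N / Real.log 2 := by
    have hpow : (2:ℝ)^J ≤ N := by exact_mod_cast Nat.pow_log_le_self 2 (by omega)
    have := Real.log_le_log (by positivity) hpow
    rw [Real.log_pow] at this
    rw [le_div_iff₀ hl2]
    exact_mod_cast this
  have hlogJ : Real.log J ≤ Real.log (Real.log N) + 1 := by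
    have hstep : Real.log J ≤ Real.log (Real.log N / Real.log 2) :=
      Real.log_le_log hJpos hJleN
    have hlogN : (0:ℝ) < Real.log N :=
      Real.log_pos (by exact_mod_cast (by omega : 1 < N))
    rw [Real.log_div hlogN.ne' hl2.ne'] at hstep
    have : -Real.log (Real.log 2) ≤ 1 := by
      have he : Real.exp (-1) ≤ Real.log 2 := by
        rw [Real.exp_neg]
        have h1 : (2.7182818283 : ℝ) < Real.exp 1 := Real.exp_one_gt_d9
        have h2 : (0.6931471803 : ℝ) < Real.log 2 := Real.log_two_gt_d9
        have hinv : (Real.exp 1)⁻¹ ≤ (2.7182818283 : ℝ)⁻¹ :=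
          inv_anti₀ (by norm_num) h1.le
        calc (Real.exp 1)⁻¹ ≤ (2.7182818283 : ℝ)⁻¹ := hinv
          _ ≤ 0.6931471803 := by norm_num
          _ ≤ Real.log 2 := h2.le
      have := Real.log_le_log (Real.exp_pos _) he
      rw [Real.log_exp] at this
      linarith
    linarith
  have hfrac : 8 * (1 - 1/(J:ℝ)) ≤ 8 := by
    have : 0 ≤ 1/(J:ℝ) := by positivity
    linarith
  calc ∑ p ∈ (range (N+1)).filter Nat.Prime, (1:ℝ)/p
      ≤ Real.log J + (∑ p ∈ (range (2^(J+1))).filter Nat.Prime, Real.log p / p) / (J * Real.log 2)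
        + 8 * (1 - 1/J) := h1.trans h2
    _ ≤ (Real.log (Real.log N) + 1) + 4 + 8 := by
        have := h3.trans h4
        linarith
    _ ≤ Real.log (Real.log N) + 13 := by linarith

lemma radical_log (ℓ : ℕ) (hl : 1 ≤ ℓ) :
    ∑ p ∈ ℓ.primeFactors, Real.log p ≤ Real.log ℓ := by
  have h1 : ∑ p ∈ ℓ.primeFactors, Real.log p
      = Real.log (((∏ p ∈ ℓ.primeFactors, p : ℕ) : ℝ)) := by
    push_cast
    rw [Real.log_prod]
    intro p hp
    have := (Nat.prime_of_mem_primeFactors hp).pos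
    positivity
  rw [h1]
  apply Real.log_le_log
  · exact_mod_cast Nat.pos_of_ne_zero fun h => by
      have h2 := Nat.prod_primeFactors_dvd ℓ
      rw [h] at h2
      have := Nat.eq_zero_of_zero_dvd h2
      omega
  · exact_mod_cast Nat.le_of_dvd (by omega) (Nat.prod_primeFactors_dvd ℓ)

lemma primeFactors_le_subset (ℓ T : ℕ) :
    ℓ.primeFactors.filter (fun p => p ≤ T) ⊆ (range (T+1)).filter Nat.Prime := by
  intro p hp
  obtain ⟨hp1, hp2⟩ := Finset.mem_filter.mp hp
  exact Finset.mem_filter.mpr ⟨Finset.mem_range.mpr (by omega),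
    Nat.prime_of_mem_primeFactors hp1⟩

lemma filter_log_le (ℓ T : ℕ) (hl : 1 ≤ ℓ) :
    ∑ p ∈ ℓ.primeFactors.filter (fun p => ¬ p ≤ T), Real.log p ≤ Real.log ℓ := by
  calc ∑ p ∈ ℓ.primeFactors.filter (fun p => ¬ p ≤ T), Real.log p
      ≤ ∑ p ∈ ℓ.primeFactors, Real.log p := by
        apply Finset.sum_le_sum_of_subset_of_nonneg (Finset.filter_subset _ _)
        intro p hp _
        have hp2 : (2:ℝ) ≤ p := by
          exact_mod_cast (Nat.prime_of_mem_primeFactors hp).two_le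
        exact Real.log_nonneg (by linarith)
    _ ≤ Real.log ℓ := radical_log ℓ hl

lemma A_bound (ℓ T : ℕ) (hl : 1 ≤ ℓ) (hT2 : 2 ≤ T) (hTlog : Real.log ℓ ≤ T) :
    ∑ p ∈ ℓ.primeFactors, Real.log p / ((p:ℝ)-1)
      ≤ 2 * Real.log T + 2 * Real.log 4 + 1 := by
  have hTpos : (0:ℝ) < T := by exact_mod_cast (by omega : 0 < T)
  rw [← Finset.sum_filter_add_sum_filter_not ℓ.primeFactors (fun p => p ≤ T)]
  have hsmall : ∑ p ∈ ℓ.primeFactors.filter (fun p => p ≤ T), Real.log p / ((p:ℝ)-1)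
      ≤ 2 * Real.log T + 2 * Real.log 4 := by
    have h1 : ∀ p ∈ ℓ.primeFactors.filter (fun p => p ≤ T),
        Real.log p / ((p:ℝ)-1) ≤ 2 * (Real.log p / p) := by
      intro p hp
      have hpp := Nat.prime_of_mem_primeFactors (Finset.mem_filter.mp hp).1
      have hp2 : (2:ℝ) ≤ p := by exact_mod_cast hpp.two_le
      have hlogp : 0 ≤ Real.log p := Real.log_nonneg (by linarith)
      calc Real.log p / ((p:ℝ)-1) ≤ Real.log p / ((p:ℝ)/2) :=
            div_le_div_of_nonneg_left hlogp (by linarith) (by linarith)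
        _ = 2 * (Real.log p / p) := by
            field_simp
    calc ∑ p ∈ ℓ.primeFactors.filter (fun p => p ≤ T), Real.log p / ((p:ℝ)-1)
        ≤ ∑ p ∈ ℓ.primeFactors.filter (fun p => p ≤ T), 2 * (Real.log p / p) :=
          Finset.sum_le_sum h1
      _ ≤ ∑ p ∈ (range (T+1)).filter Nat.Prime, 2 * (Real.log p / p) := by
          apply Finset.sum_le_sum_of_subset_of_nonneg (primeFactors_le_subset ℓ T)
          intro p hp _
          have hpp := (Finset.mem_filter.mp hp).2
          have hp2 : (2:ℝ) ≤ p := by exact_mod_cast hpp.two_le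
          have hlogp : 0 ≤ Real.log p := Real.log_nonneg (by linarith)
          positivity
      _ = 2 * ∑ p ∈ (range (T+1)).filter Nat.Prime, Real.log p / p := by
          rw [Finset.mul_sum]
      _ ≤ 2 * (Real.log T + Real.log 4) := by
          have := mertens1 T (by omega)
          linarith
      _ = 2 * Real.log T + 2 * Real.log 4 := by ring
  have hlarge : ∑ p ∈ ℓ.primeFactors.filter (fun p => ¬ p ≤ T), Real.log p / ((p:ℝ)-1)
      ≤ 1 := by
    have h1 : ∀ p ∈ ℓ.primeFactors.filter (fun p => ¬ p ≤ T),
        Real.log p / ((p:ℝ)-1) ≤ Real.log p / T := by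
      intro p hp
      obtain ⟨hp1, hp2⟩ := Finset.mem_filter.mp hp
      have hpp := Nat.prime_of_mem_primeFactors hp1
      have hpT : (T:ℝ) + 1 ≤ p := by exact_mod_cast (by omega : T + 1 ≤ p)
      have hlogp : 0 ≤ Real.log p := Real.log_nonneg (by linarith)
      exact div_le_div_of_nonneg_left hlogp hTpos (by linarith)
    calc ∑ p ∈ ℓ.primeFactors.filter (fun p => ¬ p ≤ T), Real.log p / ((p:ℝ)-1)
        ≤ ∑ p ∈ ℓ.primeFactors.filter (fun p => ¬ p ≤ T), Real.log p / T :=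
          Finset.sum_le_sum h1
      _ = (∑ p ∈ ℓ.primeFactors.filter (fun p => ¬ p ≤ T), Real.log p) / T :=
          (Finset.sum_div _ _ _).symm
      _ ≤ Real.log ℓ / T := by
          apply (div_le_div_iff_of_pos_right hTpos).mpr
          exact filter_log_le ℓ T hl
      _ ≤ 1 := by
          rw [div_le_one hTpos]
          exact hTlog
  linarith

lemma invsum_bound (ℓ T : ℕ) (hl : 1 ≤ ℓ) (hT2 : 2 ≤ T) (hTlog : Real.log ℓ ≤ T) :
    ∑ p ∈ ℓ.primeFactors, (p:ℝ)⁻¹ ≤ Real.log (Real.log T) + 15 := by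
  have hTpos : (0:ℝ) < T := by exact_mod_cast (by omega : 0 < T)
  have hlogT : (1:ℝ)/2 ≤ Real.log T := by
    have h1 : Real.log 2 ≤ Real.log T :=
      Real.log_le_log (by norm_num) (by exact_mod_cast hT2)
    have := Real.log_two_gt_d9
    linarith
  have hlogTpos : (0:ℝ) < Real.log T := by linarith
  rw [← Finset.sum_filter_add_sum_filter_not ℓ.primeFactors (fun p => p ≤ T)]
  have hsmall : ∑ p ∈ ℓ.primeFactors.filter (fun p => p ≤ T), (p:ℝ)⁻¹
      ≤ Real.log (Real.log T) + 13 := by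
    calc ∑ p ∈ ℓ.primeFactors.filter (fun p => p ≤ T), (p:ℝ)⁻¹
        ≤ ∑ p ∈ (range (T+1)).filter Nat.Prime, (1:ℝ)/p := by
          rw [show (fun p : ℕ => (1:ℝ)/p) = (fun p : ℕ => ((p:ℝ))⁻¹) by
            funext p; rw [one_div]]
          apply Finset.sum_le_sum_of_subset_of_nonneg (primeFactors_le_subset ℓ T)
          intro p hp _
          positivity
      _ ≤ Real.log (Real.log T) + 13 := mertens2 T hT2
  have hlarge : ∑ p ∈ ℓ.primeFactors.filter (fun p => ¬ p ≤ T), (p:ℝ)⁻¹ ≤ 2 := by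
    have h1 : ∀ p ∈ ℓ.primeFactors.filter (fun p => ¬ p ≤ T),
        (p:ℝ)⁻¹ ≤ Real.log p / ((T:ℝ) * Real.log T) := by
      intro p hp
      obtain ⟨hp1, hp2⟩ := Finset.mem_filter.mp hp
      have hpp := Nat.prime_of_mem_primeFactors hp1
      have hpT : (T:ℝ) ≤ p := by exact_mod_cast (by omega : T ≤ p)
      have hppos : (0:ℝ) < p := by linarith
      have hlogTp : Real.log T ≤ Real.log p := Real.log_le_log hTpos hpT
      have hm : (T:ℝ) * Real.log T ≤ (p:ℝ) * Real.log p :=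
        mul_le_mul hpT hlogTp hlogTpos.le hppos.le
      rw [inv_eq_one_div, div_le_div_iff₀ hppos (by positivity)]
      linarith
    calc ∑ p ∈ ℓ.primeFactors.filter (fun p => ¬ p ≤ T), (p:ℝ)⁻¹
        ≤ ∑ p ∈ ℓ.primeFactors.filter (fun p => ¬ p ≤ T),
            Real.log p / ((T:ℝ) * Real.log T) := Finset.sum_le_sum h1
      _ = (∑ p ∈ ℓ.primeFactors.filter (fun p => ¬ p ≤ T), Real.log p)
            / ((T:ℝ) * Real.log T) := (Finset.sum_div _ _ _).symm
      _ ≤ Real.log ℓ / ((T:ℝ) * Real.log T) := by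
          apply (div_le_div_iff_of_pos_right (by positivity : (0:ℝ) < (T:ℝ) * Real.log T)).mpr
          exact filter_log_le ℓ T hl
      _ ≤ (T:ℝ) / ((T:ℝ) * Real.log T) := by
          apply (div_le_div_iff_of_pos_right (by positivity : (0:ℝ) < (T:ℝ) * Real.log T)).mpr hTlog
      _ = (Real.log T)⁻¹ := by field_simp
      _ ≤ 2 := by
          calc (Real.log T)⁻¹ ≤ ((1:ℝ)/2)⁻¹ := inv_anti₀ (by norm_num) hlogT
            _ = 2 := by norm_num
  linarith

lemma tele_aux : ∀ M : ℕ, 2 ≤ M →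
    ∑ p ∈ Icc 2 M, (((p:ℝ)-1)⁻¹ - (p:ℝ)⁻¹) = 1 - (M:ℝ)⁻¹ := by
  intro M hM
  induction M, hM using Nat.le_induction with
  | base => norm_num
  | succ M hM ih =>
    rw [← Finset.insert_Icc_right_eq_Icc_add_one (by omega), Finset.sum_insert (by simp)]
    rw [ih]
    have hM1 : (1:ℝ) ≤ (M:ℝ) := by exact_mod_cast hM.trans' (by norm_num)
    have h1 : ((M:ℝ)+1) - 1 = (M:ℝ) := by ring
    push_cast
    rw [h1]
    ring

lemma tele (s : Finset ℕ) (h : ∀ p ∈ s, 2 ≤ p) :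
    ∑ p ∈ s, (((p:ℝ)-1)⁻¹ - (p:ℝ)⁻¹) ≤ 1 := by
  rcases s.eq_empty_or_nonempty with rfl | hne
  · simp
  set M := max 2 (s.sup id) with hM
  have hsub : s ⊆ Icc 2 M := by
    intro p hp
    rw [Finset.mem_Icc]
    exact ⟨h p hp, le_max_of_le_right (Finset.le_sup (f := id) hp)⟩
  have hM2 : 2 ≤ M := le_max_left _ _
  have hMpos : (0:ℝ) < (M:ℝ) := by exact_mod_cast (by omega : 0 < M)
  calc ∑ p ∈ s, (((p:ℝ)-1)⁻¹ - (p:ℝ)⁻¹)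
      ≤ ∑ p ∈ Icc 2 M, (((p:ℝ)-1)⁻¹ - (p:ℝ)⁻¹) := by
        apply Finset.sum_le_sum_of_subset_of_nonneg hsub
        intro p hp _
        have hp2 : 2 ≤ p := (Finset.mem_Icc.mp hp).1
        have hp2' : (2:ℝ) ≤ p := by exact_mod_cast hp2
        rw [sub_nonneg]
        apply inv_anti₀ (by linarith) (by linarith)
    _ = 1 - (M:ℝ)⁻¹ := tele_aux M hM2
    _ ≤ 1 := by
        have : 0 < (M:ℝ)⁻¹ := by positivity
        linarith

lemma prod_bound (s : Finset ℕ) (hs : ∀ p ∈ s, p.Prime) :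
    ∏ p ∈ s, (1-(p:ℝ)⁻¹)⁻¹ ≤ Real.exp (1 + ∑ p ∈ s, (p:ℝ)⁻¹) := by
  have hfac : ∀ p ∈ s, (1-(p:ℝ)⁻¹)⁻¹ = 1 + ((p:ℝ)-1)⁻¹ := by
    intro p hp
    have hp2 : (2:ℝ) ≤ p := by exact_mod_cast (hs p hp).two_le
    have hp0 : (p:ℝ) ≠ 0 := by linarith
    have hp1 : (p:ℝ) - 1 ≠ 0 := by linarith
    have h1r : 1 - (p:ℝ)⁻¹ ≠ 0 := by
      have : (p:ℝ)⁻¹ < 1 := by rw [inv_lt_one_iff₀]; right; linarith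
      linarith
    field_simp
    ring
  calc ∏ p ∈ s, (1-(p:ℝ)⁻¹)⁻¹ = ∏ p ∈ s, (1 + ((p:ℝ)-1)⁻¹) := Finset.prod_congr rfl hfac
    _ ≤ ∏ p ∈ s, Real.exp (((p:ℝ)-1)⁻¹) := by
        apply Finset.prod_le_prod
        · intro p hp
          have hp2 : (2:ℝ) ≤ p := by exact_mod_cast (hs p hp).two_le
          have : 0 < (p:ℝ) - 1 := by linarith
          positivity
        · intro p hp
          have := Real.add_one_le_exp (((p:ℝ)-1)⁻¹)
          linarith
    _ = Real.exp (∑ p ∈ s, ((p:ℝ)-1)⁻¹) := (Real.exp_sum s _).symm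
    _ ≤ Real.exp (1 + ∑ p ∈ s, (p:ℝ)⁻¹) := by
        apply Real.exp_le_exp.mpr
        have h1 : ∑ p ∈ s, ((p:ℝ)-1)⁻¹
            = ∑ p ∈ s, (((p:ℝ)-1)⁻¹ - (p:ℝ)⁻¹) + ∑ p ∈ s, (p:ℝ)⁻¹ := by
          rw [← Finset.sum_add_distrib]
          apply Finset.sum_congr rfl
          intro p hp; ring
        rw [h1]
        have := tele s (fun p hp => (hs p hp).two_le)
        linarith

lemma factored_tsum_bound : ∀ (s : Finset ℕ), (∀ p ∈ s, p.Prime) →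
    Summable (fun m : Nat.factoredNumbers s => (((m:ℕ)):ℝ)⁻¹) ∧
    Summable (fun m : Nat.factoredNumbers s => Real.log (m:ℕ) / ((m:ℕ):ℝ)) ∧
    (∑' m : Nat.factoredNumbers s, (((m:ℕ)):ℝ)⁻¹) ≤ ∏ p ∈ s, (1 - (p:ℝ)⁻¹)⁻¹ ∧
    (∑' m : Nat.factoredNumbers s, Real.log (m:ℕ) / ((m:ℕ):ℝ))
      ≤ (∑ p ∈ s, Real.log p / ((p:ℝ)-1)) * ∏ p ∈ s, (1 - (p:ℝ)⁻¹)⁻¹ := by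
  intro s
  induction s using Finset.induction with
  | empty =>
    intro _
    rw [Nat.factoredNumbers_empty]
    haveI := (Set.finite_singleton (1:ℕ)).to_subtype
    refine ⟨Summable.of_finite, Summable.of_finite, ?_, ?_⟩
    · rw [tsum_singleton (1:ℕ) (fun u : ℕ => ((u:ℕ):ℝ)⁻¹)]
      norm_num
    · rw [tsum_singleton (1:ℕ) (fun u : ℕ => Real.log u / (u:ℝ))]
      norm_num
  | @insert p s hps ih =>
    intro hs
    have hpp : p.Prime := hs p (Finset.mem_insert_self p s)
    have hs' : ∀ q ∈ s, q.Prime := fun q hq => hs q (Finset.mem_insert_of_mem hq)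
    obtain ⟨hB, hT, hBle, hTle⟩ := ih hs'
    have hp2 : (2:ℝ) ≤ p := by exact_mod_cast hpp.two_le
    have hp0 : (p:ℝ) ≠ 0 := by linarith
    have hp1 : (p:ℝ) - 1 ≠ 0 := by linarith
    set r : ℝ := (p:ℝ)⁻¹ with hr_def
    have hr0 : 0 ≤ r := by positivity
    have hr1 : r < 1 := by
      rw [hr_def, inv_lt_one_iff₀]; right; linarith
    have h1r : 0 < 1 - r := by linarith
    have hrnorm : ‖r‖ < 1 := by rw [Real.norm_eq_abs, abs_of_nonneg hr0]; exact hr1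
    have hlogp : 0 ≤ Real.log p := Real.log_nonneg (by linarith)
    -- component functions
    set u0 : ℕ → ℝ := fun n => r ^ n with hu0_def
    set u1 : ℕ → ℝ := fun n => Real.log p * ((n:ℝ) * r ^ n) with hu1_def
    set v0 : (Nat.factoredNumbers s) → ℝ := fun m => ((m:ℕ):ℝ)⁻¹ with hv0_def
    set v1 : (Nat.factoredNumbers s) → ℝ := fun m => Real.log (m:ℕ) / ((m:ℕ):ℝ) with hv1_def
    have hu0 : Summable u0 := summable_geometric_of_lt_one hr0 hr1
    have hnr : Summable (fun n : ℕ => (n:ℝ) * r ^ n) := by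
      have := summable_pow_mul_geometric_of_norm_lt_one (R := ℝ) 1 hrnorm
      simpa using this
    have hu1 : Summable u1 := hnr.mul_left _
    have hmnonneg : ∀ m : Nat.factoredNumbers s, (1:ℝ) ≤ ((m:ℕ):ℝ) := by
      intro m
      have := Nat.ne_zero_of_mem_factoredNumbers m.prop
      exact_mod_cast Nat.one_le_iff_ne_zero.mpr this
    have hu0' : ∀ n, 0 ≤ u0 n := fun n => by positivity
    have hu1' : ∀ n, 0 ≤ u1 n := fun n => by positivity
    have hv0' : ∀ m, 0 ≤ v0 m := fun m => by
      have := hmnonneg m; positivity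
    have hv1' : ∀ m, 0 ≤ v1 m := fun m => by
      have h1 := hmnonneg m
      have h2 : 0 ≤ Real.log (m:ℕ) := Real.log_nonneg h1
      positivity
    -- summability on products
    have hS00 : Summable (fun x : ℕ × Nat.factoredNumbers s => u0 x.1 * v0 x.2) :=
      hu0.mul_of_nonneg hB hu0' hv0'
    have hS10 : Summable (fun x : ℕ × Nat.factoredNumbers s => u1 x.1 * v0 x.2) :=
      hu1.mul_of_nonneg hB hu1' hv0'
    have hS01 : Summable (fun x : ℕ × Nat.factoredNumbers s => u0 x.1 * v1 x.2) :=
      hu0.mul_of_nonneg hT hu0' hv1'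
    set e := Nat.equivProdNatFactoredNumbers hpp hps with he_def
    -- pointwise identities
    have hcast : ∀ x : ℕ × Nat.factoredNumbers s, (((e x : ℕ)):ℝ) = (p:ℝ)^x.1 * ((x.2:ℕ):ℝ) := by
      intro x
      rw [Nat.equivProdNatFactoredNumbers_apply' hpp hps x]
      push_cast
      ring
    have hfun0 : ∀ x : ℕ × Nat.factoredNumbers s, (((e x : ℕ)):ℝ)⁻¹ = u0 x.1 * v0 x.2 := by
      intro x
      rw [hcast x, mul_inv, hu0_def, hv0_def, hr_def, ← inv_pow]
    have hfun1 : ∀ x : ℕ × Nat.factoredNumbers s,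
        Real.log (e x : ℕ) / (((e x : ℕ)):ℝ) = u1 x.1 * v0 x.2 + u0 x.1 * v1 x.2 := by
      intro x
      have hm1 : (1:ℝ) ≤ ((x.2:ℕ):ℝ) := hmnonneg x.2
      have hm0 : ((x.2:ℕ):ℝ) ≠ 0 := by linarith
      have hpn : (p:ℝ)^x.1 ≠ 0 := pow_ne_zero _ hp0
      rw [hcast x]
      rw [Real.log_mul hpn hm0, Real.log_pow]
      simp only [hu0_def, hu1_def, hv0_def, hv1_def, hr_def, ← inv_pow]
      field_simp
      have hpp1 : (p:ℝ)^x.1 * (p:ℝ)⁻¹^x.1 = 1 := by rw [← mul_pow, mul_inv_cancel₀ hp0, one_pow]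
      linear_combination (-((x.1:ℝ) * Real.log p + Real.log ((x.2:ℕ):ℝ))) * hpp1
    -- summability for insert
    have hBi : Summable (fun m : Nat.factoredNumbers (insert p s) => (((m:ℕ)):ℝ)⁻¹) := by
      rw [← e.summable_iff]
      exact hS00.congr fun x => (hfun0 x).symm
    have hTi : Summable (fun m : Nat.factoredNumbers (insert p s) =>
        Real.log (m:ℕ) / ((m:ℕ):ℝ)) := by
      rw [← e.summable_iff]
      exact (hS10.add hS01).congr fun x => (hfun1 x).symm
    -- norm summability helpers
    have hnorm : ∀ {ι : Type} (g : ι → ℝ), (∀ i, 0 ≤ g i) → Summable g →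
        Summable (fun i => ‖g i‖) := by
      intro ι g hg hsum
      refine hsum.congr fun i => ?_
      rw [Real.norm_eq_abs, abs_of_nonneg (hg i)]
    -- tsum values
    have hg0 : ∑' n, u0 n = (1-r)⁻¹ := tsum_geometric_of_lt_one hr0 hr1
    have hg1 : ∑' n, u1 n = Real.log p * (r / (1-r)^2) := by
      rw [hu1_def, hnr.tsum_mul_left, tsum_coe_mul_geometric_of_norm_lt_one hrnorm]
    have htsum0 : (∑' m : Nat.factoredNumbers (insert p s), (((m:ℕ)):ℝ)⁻¹)
        = (1-r)⁻¹ * (∑' m : Nat.factoredNumbers s, v0 m) := by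
      rw [← e.tsum_eq (fun m : Nat.factoredNumbers (insert p s) => (((m:ℕ)):ℝ)⁻¹)]
      rw [tsum_congr hfun0]
      rw [← tsum_mul_tsum_of_summable_norm (hnorm u0 hu0' hu0) (hnorm v0 hv0' hB)]
      rw [hg0]
    have htsum1 : (∑' m : Nat.factoredNumbers (insert p s), Real.log (m:ℕ) / ((m:ℕ):ℝ))
        = Real.log p * (r / (1-r)^2) * (∑' m : Nat.factoredNumbers s, v0 m)
          + (1-r)⁻¹ * (∑' m : Nat.factoredNumbers s, v1 m) := by
      rw [← e.tsum_eq (fun m : Nat.factoredNumbers (insert p s) =>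
        Real.log (m:ℕ) / ((m:ℕ):ℝ))]
      rw [tsum_congr hfun1]
      rw [Summable.tsum_add hS10 hS01]
      rw [← tsum_mul_tsum_of_summable_norm (hnorm u1 hu1' hu1) (hnorm v0 hv0' hB)]
      rw [← tsum_mul_tsum_of_summable_norm (hnorm u0 hu0' hu0) (hnorm v1 hv1' hT)]
      rw [hg0, hg1]
    -- nonnegativity of various sums/products
    have hProd : 0 ≤ ∏ q ∈ s, (1 - (q:ℝ)⁻¹)⁻¹ := by
      apply Finset.prod_nonneg
      intro q hq
      have hq2 : (2:ℝ) ≤ q := by exact_mod_cast (hs' q hq).two_le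
      have : 0 < 1 - (q:ℝ)⁻¹ := by
        rw [sub_pos, inv_lt_one_iff₀]; right; linarith
      positivity
    have hA : 0 ≤ ∑ q ∈ s, Real.log q / ((q:ℝ)-1) := by
      apply Finset.sum_nonneg
      intro q hq
      have hq2 : (2:ℝ) ≤ q := by exact_mod_cast (hs' q hq).two_le
      have h1 : 0 ≤ Real.log q := Real.log_nonneg (by linarith)
      have h2 : 0 < (q:ℝ) - 1 := by linarith
      positivity
    have hr1inv : 0 ≤ (1-r)⁻¹ := by positivity
    -- conclusion
    have hprodins : ∏ q ∈ insert p s, (1 - (q:ℝ)⁻¹)⁻¹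
        = (1 - (p:ℝ)⁻¹)⁻¹ * ∏ q ∈ s, (1 - (q:ℝ)⁻¹)⁻¹ := Finset.prod_insert hps
    have hsumins : ∑ q ∈ insert p s, Real.log q / ((q:ℝ)-1)
        = Real.log p / ((p:ℝ)-1) + ∑ q ∈ s, Real.log q / ((q:ℝ)-1) := Finset.sum_insert hps
    refine ⟨hBi, hTi, ?_, ?_⟩
    · rw [htsum0, hprodins]
      exact mul_le_mul_of_nonneg_left hBle hr1inv
    · rw [htsum1, hprodins, hsumins]
      have hkey : r / (1-r)^2 = (1-r)⁻¹ * ((p:ℝ)-1)⁻¹ := by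
        rw [hr_def]
        have h1rp : 1 - (p:ℝ)⁻¹ ≠ 0 := by
          rw [hr_def] at h1r; linarith
        field_simp
      have step1 : Real.log p * (r / (1-r)^2) * (∑' m : Nat.factoredNumbers s, v0 m)
            + (1-r)⁻¹ * (∑' m : Nat.factoredNumbers s, v1 m)
          ≤ Real.log p * (r / (1-r)^2) * (∏ q ∈ s, (1 - (q:ℝ)⁻¹)⁻¹)
            + (1-r)⁻¹ * ((∑ q ∈ s, Real.log q / ((q:ℝ)-1)) * ∏ q ∈ s, (1 - (q:ℝ)⁻¹)⁻¹) := by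
        apply add_le_add
        · apply mul_le_mul_of_nonneg_left hBle
          positivity
        · exact mul_le_mul_of_nonneg_left hTle hr1inv
      refine step1.trans (le_of_eq ?_)
      rw [hkey, div_eq_mul_inv]
      ring


theorem sum_log_div_self_smooth_bound :
    ∃ C : ℝ, 0 < C ∧ ∀ ℓ : ℕ, 1 ≤ ℓ →
      (∑' u : ℕ, if 0 < u ∧ ∀ p : ℕ, p.Prime → p ∣ u → p ∣ ℓ
        then Real.log u / u else 0)
      ≤ C * (Real.log (Real.log (ℓ + 2))) ^ 2 := by
  refine ⟨6642 * Real.exp 16, by positivity, ?_⟩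
  intro ℓ hℓ
  -- numerics
  have hexp19 : Real.exp ((1:ℝ)/19) ≤ 19/18 := by
    have h' := Real.add_one_le_exp (-(1/19 : ℝ))
    rw [Real.exp_neg] at h'
    have hprod : (Real.exp ((1:ℝ)/19))⁻¹ * Real.exp ((1:ℝ)/19) = 1 := by
      rw [inv_mul_cancel₀ (Real.exp_pos _).ne']
    nlinarith [Real.exp_pos ((1:ℝ)/19)]
  have hexp20 : Real.exp ((1:ℝ)/20) ≤ 20/19 := by
    have h' := Real.add_one_le_exp (-(1/20 : ℝ))
    rw [Real.exp_neg] at h'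
    have hprod : (Real.exp ((1:ℝ)/20))⁻¹ * Real.exp ((1:ℝ)/20) = 1 := by
      rw [inv_mul_cancel₀ (Real.exp_pos _).ne']
    nlinarith [Real.exp_pos ((1:ℝ)/20)]
  have hlog3 : (20:ℝ)/19 ≤ Real.log 3 := by
    rw [Real.le_log_iff_exp_le (by norm_num : (0:ℝ) < 3)]
    have h1 : Real.exp ((20:ℝ)/19) = Real.exp 1 * Real.exp ((1:ℝ)/19) := by
      rw [← Real.exp_add]; norm_num
    rw [h1]
    have h2 : Real.exp 1 ≤ 2.7182818286 := Real.exp_one_lt_d9.le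
    nlinarith [Real.exp_pos ((1:ℝ)/19), Real.exp_pos 1]
  -- setup
  set t := Real.log ((ℓ:ℝ) + 2) with ht_def
  have hℓ1 : (1:ℝ) ≤ (ℓ:ℝ) := by exact_mod_cast hℓ
  have ht3 : Real.log 3 ≤ t := Real.log_le_log (by norm_num) (by linarith)
  have ht : (20:ℝ)/19 ≤ t := hlog3.trans ht3
  have htpos : 0 < t := by linarith
  set Y := Real.log t with hY_def
  have hY : (1:ℝ)/20 ≤ Y := by
    rw [hY_def, Real.le_log_iff_exp_le htpos]
    linarith
  set T : ℕ := ⌊Real.log ℓ⌋₊ + 2 with hT_def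
  have hT2 : 2 ≤ T := by omega
  have hlogl0 : 0 ≤ Real.log ℓ := Real.log_nonneg hℓ1
  have hTlog : Real.log ℓ ≤ T := by
    have := Nat.lt_floor_add_one (Real.log ℓ)
    have hc : ((T:ℕ):ℝ) = (⌊Real.log ℓ⌋₊ : ℝ) + 2 := by rw [hT_def]; push_cast; ring
    rw [hc]
    linarith
  have hTle : (T:ℝ) ≤ t + 2 := by
    have h1 : (⌊Real.log ℓ⌋₊ : ℝ) ≤ Real.log ℓ := Nat.floor_le hlogl0
    have h2 : Real.log ℓ ≤ t := Real.log_le_log (by linarith) (by linarith)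
    have hc : ((T:ℕ):ℝ) = (⌊Real.log ℓ⌋₊ : ℝ) + 2 := by rw [hT_def]; push_cast; ring
    rw [hc]
    linarith
  set X := Real.log (t + 2) with hX_def
  have hXpos : 0 < X := Real.log_pos (by linarith)
  have hTpos : (0:ℝ) < T := by exact_mod_cast (by omega : 0 < T)
  have hlogT_le : Real.log T ≤ X := Real.log_le_log hTpos hTle
  have hlogTpos : 0 < Real.log T := by
    apply Real.log_pos
    exact_mod_cast (by omega : 1 < T)
  have hXY : X ≤ 41 * Y := by
    have h := Real.log_le_sub_one_of_pos (show (0:ℝ) < (t+2)/t by positivity)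
    rw [Real.log_div (by linarith) htpos.ne'] at h
    have h2 : (t+2)/t - 1 = 2/t := by rw [div_sub_one htpos.ne']; ring
    have h3 : 2/t ≤ 2 := by
      rw [div_le_iff₀ htpos]
      linarith
    have : X - Y ≤ 2 := by rw [hX_def, hY_def]; linarith [h2 ▸ h]
    linarith
  -- prime factor bounds
  have hPprime : ∀ p ∈ ℓ.primeFactors, p.Prime := fun p hp => Nat.prime_of_mem_primeFactors hp
  have hA : ∑ p ∈ ℓ.primeFactors, Real.log p / ((p:ℝ)-1) ≤ 162 * Y := by
    have h1 := A_bound ℓ T hℓ hT2 hTlog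
    have hlog4 : Real.log 4 ≤ 1.4 := by
      rw [show (4:ℝ) = 2^2 by norm_num, Real.log_pow]
      have := Real.log_two_lt_d9
      push_cast
      linarith
    have : 2 * Real.log T + 2*Real.log 4 + 1 ≤ 2*X + 4 := by linarith
    calc ∑ p ∈ ℓ.primeFactors, Real.log p / ((p:ℝ)-1) ≤ 2*X + 4 := by linarith
      _ ≤ 2*(41*Y) + 80*Y := by linarith
      _ = 162 * Y := by ring
  have hPi : ∏ p ∈ ℓ.primeFactors, (1-(p:ℝ)⁻¹)⁻¹ ≤ 41 * Real.exp 16 * Y := by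
    have h1 := prod_bound ℓ.primeFactors hPprime
    have h2 := invsum_bound ℓ T hℓ hT2 hTlog
    have h3 : Real.log (Real.log T) ≤ Real.log X := Real.log_le_log hlogTpos hlogT_le
    have h4 : 1 + ∑ p ∈ ℓ.primeFactors, (p:ℝ)⁻¹ ≤ 16 + Real.log X := by linarith
    calc ∏ p ∈ ℓ.primeFactors, (1-(p:ℝ)⁻¹)⁻¹
        ≤ Real.exp (1 + ∑ p ∈ ℓ.primeFactors, (p:ℝ)⁻¹) := h1
      _ ≤ Real.exp (16 + Real.log X) := Real.exp_le_exp.mpr h4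
      _ = Real.exp 16 * X := by rw [Real.exp_add, Real.exp_log hXpos]
      _ ≤ Real.exp 16 * (41*Y) := by
          apply mul_le_mul_of_nonneg_left ?_ (Real.exp_pos 16).le
          exact hXY
      _ = 41 * Real.exp 16 * Y := by ring
  have hPi0 : 0 ≤ ∏ p ∈ ℓ.primeFactors, (1-(p:ℝ)⁻¹)⁻¹ := by
    apply Finset.prod_nonneg
    intro q hq
    have hq2 : (2:ℝ) ≤ q := by exact_mod_cast (hPprime q hq).two_le
    have : 0 < 1 - (q:ℝ)⁻¹ := by
      have : (q:ℝ)⁻¹ ≤ 1/2 := by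
        rw [inv_le_comm₀ (by linarith) (by norm_num)]
        linarith
      linarith
    positivity
  -- tsum conversion
  have hiff : ∀ u : ℕ, (0 < u ∧ ∀ p : ℕ, p.Prime → p ∣ u → p ∣ ℓ)
      ↔ u ∈ Nat.factoredNumbers ℓ.primeFactors := by
    intro u
    constructor
    · rintro ⟨hu, h⟩
      rw [Nat.mem_factoredNumbers']
      intro p hp hpu
      exact Nat.mem_primeFactors.mpr ⟨hp, h p hp hpu, by omega⟩
    · intro h
      have h0 := Nat.ne_zero_of_mem_factoredNumbers h
      rw [Nat.mem_factoredNumbers'] at h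
      exact ⟨Nat.pos_of_ne_zero h0,
        fun p hp hpu => (Nat.mem_primeFactors.mp (h p hp hpu)).2.1⟩
  have h1 : (∑' u : ℕ, if 0 < u ∧ ∀ p : ℕ, p.Prime → p ∣ u → p ∣ ℓ
        then Real.log u / u else 0)
      = ∑' m : Nat.factoredNumbers ℓ.primeFactors, Real.log (m:ℕ) / ((m:ℕ):ℝ) := by
    rw [tsum_subtype (Nat.factoredNumbers ℓ.primeFactors) (fun u : ℕ => Real.log u / (u:ℝ))]
    apply tsum_congr
    intro u
    rw [Set.indicator_apply]
    by_cases h : u ∈ Nat.factoredNumbers ℓ.primeFactors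
    · rw [if_pos h, if_pos ((hiff u).mpr h)]
    · rw [if_neg h, if_neg (fun hc => h ((hiff u).mp hc))]
  rw [h1]
  have h2 := (factored_tsum_bound ℓ.primeFactors hPprime).2.2.2
  have hA0 : (0:ℝ) ≤ 162 * Y := by linarith
  calc ∑' m : Nat.factoredNumbers ℓ.primeFactors, Real.log (m:ℕ) / ((m:ℕ):ℝ)
      ≤ (∑ p ∈ ℓ.primeFactors, Real.log p / ((p:ℝ)-1))
          * ∏ p ∈ ℓ.primeFactors, (1 - (p:ℝ)⁻¹)⁻¹ := h2
    _ ≤ (162 * Y) * (41 * Real.exp 16 * Y) := mul_le_mul hA hPi hPi0 hA0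
    _ = 6642 * Real.exp 16 * Y^2 := by ring
    _ ≤ 6642 * Real.exp 16 * (Real.log (Real.log ((ℓ:ℝ) + 2))) ^ 2 := le_of_eq (by rw [hY_def, ht_def])
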